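/- Let r ≥ 1 and let μ, λ be r-partitions of n and n+1 respectively with μ_a ⊆ λ_a for every 1 ≤ a ≤ r. Then every triple (b,c,s) ∈ S₂(μ,λ) satisfies c ≥ b+1, a_{λ_c}(s) ≥ 1, ℓ_{μ_b}(s) ≤ −2 and s ∉ μ_b. -/

import Mathlib

/-- A Young diagram, identified with a finite set of cells `s = (i(s), j(s))` in
`ℤ≥1 × ℤ≥1`: whenever `(i, j)` is a cell and `1 ≤ i' ≤ i`, `1 ≤ j' ≤ j`, then `(i', j')`
is also a cell. -/
def IsYoung (ν : Finset (ℕ × ℕ)) : Prop :=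
  (∀ c ∈ ν, 1 ≤ c.1 ∧ 1 ≤ c.2) ∧
    (∀ c ∈ ν, ∀ i' j' : ℕ, 1 ≤ i' → i' ≤ c.1 → 1 ≤ j' → j' ≤ c.2 → (i', j') ∈ ν)

/-- `ν_i`: the number of cells in column `i` of `ν`. -/
def colLen (ν : Finset (ℕ × ℕ)) (i : ℕ) : ℕ := (ν.filter (fun c => c.1 = i)).card

/-- `νᵗ_j`: the number of cells in row `j` of `ν`. -/
def rowLen (ν : Finset (ℕ × ℕ)) (j : ℕ) : ℕ := (ν.filter (fun c => c.2 = j)).card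

/-- The (possibly negative) leg `ℓ_ν(s) = ν_{i(s)} − j(s)`. -/
def leg (ν : Finset (ℕ × ℕ)) (s : ℕ × ℕ) : ℤ := (colLen ν s.1 : ℤ) - (s.2 : ℤ)

/-- The (possibly negative) arm `a_ν(s) = νᵗ_{j(s)} − i(s)`. -/
def arm (ν : Finset (ℕ × ℕ)) (s : ℕ × ℕ) : ℤ := (rowLen ν s.2 : ℤ) - (s.1 : ℤ)

/-- An `r`-partition `μ = (μ₁, …, μ_r)` (indexed by `Fin r`, with index `a : Fin r`
corresponding to `μ_{a+1}`) is nested if `μ_r ⊆ μ_{r−1} ⊆ … ⊆ μ₁`. -/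
def Nested {r : ℕ} (μ : Fin r → Finset (ℕ × ℕ)) : Prop :=
  ∀ a b : Fin r, a ≤ b → μ b ⊆ μ a

/-- The set `S₁(μ)` of triples `(b, c, s)` with `1 ≤ c < b ≤ r`, `s ∈ μ_b \ μ_c`,
`b − c + ℓ_{μ_c}(s) = 0` and `b − c − a_{μ_b}(s) − 1 = 0`. -/
def S1 {r : ℕ} (μ : Fin r → Finset (ℕ × ℕ)) : Set (Fin r × Fin r × (ℕ × ℕ)) :=
  {t | t.2.1 < t.1 ∧ t.2.2 ∈ μ t.1 ∧ t.2.2 ∉ μ t.2.1 ∧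
    ((t.1 : ℕ) : ℤ) - ((t.2.1 : ℕ) : ℤ) + leg (μ t.2.1) t.2.2 = 0 ∧
    ((t.1 : ℕ) : ℤ) - ((t.2.1 : ℕ) : ℤ) - arm (μ t.1) t.2.2 - 1 = 0}

/-- The set `S₂(μ)` of triples `(b, c, s)` with `1 ≤ b < c ≤ r`, `s ∈ μ_c \ μ_b`,
`b − c − ℓ_{μ_b}(s) − 1 = 0` and `b − c + a_{μ_c}(s) = 0`. -/
def S2 {r : ℕ} (μ : Fin r → Finset (ℕ × ℕ)) : Set (Fin r × Fin r × (ℕ × ℕ)) :=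
  {t | t.1 < t.2.1 ∧ t.2.2 ∈ μ t.2.1 ∧ t.2.2 ∉ μ t.1 ∧
    ((t.1 : ℕ) : ℤ) - ((t.2.1 : ℕ) : ℤ) - leg (μ t.1) t.2.2 - 1 = 0 ∧
    ((t.1 : ℕ) : ℤ) - ((t.2.1 : ℕ) : ℤ) + arm (μ t.2.1) t.2.2 = 0}

/-- For a pair `μ ⊆ λ` of `r`-partitions of `n` and `n + 1` with `λ_d \ μ_d = {u}` at the
unique differing index `d`, the set `S₁(μ, λ)` of triples `(b, c, s)` with `s ∈ λ_b`,
`(b, s) ≠ (d, u)`, `b − c + ℓ_{λ_c}(s) = 0` and `b − c − a_{μ_b}(s) − 1 = 0`. -/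
def S1p {r : ℕ} (μ lam : Fin r → Finset (ℕ × ℕ)) (d : Fin r) (u : ℕ × ℕ) :
    Set (Fin r × Fin r × (ℕ × ℕ)) :=
  {t | t.2.2 ∈ lam t.1 ∧ (t.1, t.2.2) ≠ (d, u) ∧
    ((t.1 : ℕ) : ℤ) - ((t.2.1 : ℕ) : ℤ) + leg (lam t.2.1) t.2.2 = 0 ∧
    ((t.1 : ℕ) : ℤ) - ((t.2.1 : ℕ) : ℤ) - arm (μ t.1) t.2.2 - 1 = 0}

/-- For a pair `μ ⊆ λ` of `r`-partitions of `n` and `n + 1`, the set `S₂(μ, λ)` of triples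
`(b, c, s)` with `s ∈ μ_c`, `b − c − ℓ_{μ_b}(s) − 1 = 0` and `b − c + a_{λ_c}(s) = 0`. -/
def S2p {r : ℕ} (μ lam : Fin r → Finset (ℕ × ℕ)) :
    Set (Fin r × Fin r × (ℕ × ℕ)) :=
  {t | t.2.2 ∈ μ t.2.1 ∧
    ((t.1 : ℕ) : ℤ) - ((t.2.1 : ℕ) : ℤ) - leg (μ t.1) t.2.2 - 1 = 0 ∧
    ((t.1 : ℕ) : ℤ) - ((t.2.1 : ℕ) : ℤ) + arm (lam t.2.1) t.2.2 = 0}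


lemma le_colLen_of_mem {ν : Finset (ℕ × ℕ)} (hY : IsYoung ν) {s : ℕ × ℕ} (hs : s ∈ ν) :
    s.2 ≤ colLen ν s.1 := by
  have h1 := hY.1 s hs
  have : (Finset.Icc 1 s.2).card ≤ (ν.filter (fun c => c.1 = s.1)).card := by
    apply Finset.card_le_card_of_injOn (fun j => (s.1, j))
    · intro j hj
      simp only [Finset.mem_coe, Finset.mem_Icc] at hj
      exact Finset.mem_filter.mpr ⟨hY.2 s hs s.1 j h1.1 le_rfl hj.1 hj.2, rfl⟩
    · intro a _ b _ h
      exact (Prod.mk.injEq _ _ _ _ ▸ h).2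
  simpa [colLen, Nat.card_Icc] using this

lemma le_rowLen_of_mem {ν : Finset (ℕ × ℕ)} (hY : IsYoung ν) {s : ℕ × ℕ} (hs : s ∈ ν) :
    s.1 ≤ rowLen ν s.2 := by
  have h1 := hY.1 s hs
  have : (Finset.Icc 1 s.1).card ≤ (ν.filter (fun c => c.2 = s.2)).card := by
    apply Finset.card_le_card_of_injOn (fun i => (i, s.2))
    · intro i hi
      simp only [Finset.mem_coe, Finset.mem_Icc] at hi
      exact Finset.mem_filter.mpr ⟨hY.2 s hs i s.2 hi.1 hi.2 h1.2 le_rfl, rfl⟩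
    · intro a _ b _ h
      exact (Prod.mk.injEq _ _ _ _ ▸ h).1
  simpa [rowLen, Nat.card_Icc] using this

/-- Let `μ ⊆ λ` be `r`-partitions of `n` and `n + 1`. Then every triple
`(b, c, s) ∈ S₂(μ, λ)` satisfies `c ≥ b + 1`, `a_{λ_c}(s) ≥ 1`, `ℓ_{μ_b}(s) ≤ −2` and
`s ∉ μ_b`. -/
theorem stmt14 (r n : ℕ) (hr : 1 ≤ r) (μ lam : Fin r → Finset (ℕ × ℕ))
    (hYμ : ∀ a, IsYoung (μ a)) (hYlam : ∀ a, IsYoung (lam a))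
    (hμn : ∑ a, (μ a).card = n) (hlamn : ∑ a, (lam a).card = n + 1)
    (hsub : ∀ a, μ a ⊆ lam a)
    (d : Fin r) (u : ℕ × ℕ) (hd : lam d \ μ d = {u}) :
    ∀ b c : Fin r, ∀ s : ℕ × ℕ, (b, c, s) ∈ S2p μ lam →
      b < c ∧ 1 ≤ arm (lam c) s ∧ leg (μ b) s ≤ -2 ∧ s ∉ μ b := by
  intro b c s hmem
  obtain ⟨hsμc, heq1, heq2⟩ := hmem
  simp only at hsμc heq1 heq2
  have hleg : leg (μ b) s = (b : ℤ) - (c : ℤ) - 1 := by linarith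
  have harm : arm (lam c) s = (c : ℤ) - (b : ℤ) := by linarith
  -- s ∈ λ_c
  have hslc : s ∈ lam c := hsub c hsμc
  have hrow : s.1 ≤ rowLen (lam c) s.2 := le_rowLen_of_mem (hYlam c) hslc
  have hbc : b < c := by
    by_contra hbc
    push_neg at hbc
    have hbc' : (c : ℤ) ≤ (b : ℤ) := by exact_mod_cast hbc
    -- arm(λ_c,s) = c - b ≤ 0, but rowLen ≥ s.1 gives arm ≥ 0, so c = b
    have harm0 : 0 ≤ arm (lam c) s := by
      unfold arm; push_cast; omega
    have hcb : (c : ℤ) = (b : ℤ) := by omega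
    have hbeq : b = c := by
      have : (b : ℕ) = (c : ℕ) := by exact_mod_cast hcb.symm
      exact Fin.ext this
    -- then leg(μ_b,s) = -1 but s ∈ μ_b gives leg ≥ 0
    have hsμb : s ∈ μ b := hbeq ▸ hsμc
    have hcol : s.2 ≤ colLen (μ b) s.1 := le_colLen_of_mem (hYμ b) hsμb
    have : leg (μ b) s ≥ 0 := by unfold leg; push_cast; omega
    omega
  have hbc' : (b : ℤ) < (c : ℤ) := by exact_mod_cast hbc
  refine ⟨hbc, by omega, by omega, ?_⟩
  intro hsμb
  have hcol : s.2 ≤ colLen (μ b) s.1 := le_colLen_of_mem (hYμ b) hsμb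
  have : leg (μ b) s ≥ 0 := by unfold leg; push_cast; omega
  omega
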